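/- (Coverage lower bound for a data-driven model selection; content of Proposition A1 and Corollaries A2–A3 for the naive benchmark.) Let (Ω, F, P) be a probability space and G ⊆ F a sub-σ-algebra. Let n ≥ 1, α ∈ (0,1), l = ⌊α(n+1)⌋ with 1 ≤ l ≤ n, and T ≥ 1. Let A_1, …, A_T ∈ F be events such that for each t ∈ {1, …, T} the conditional probability W_t = P(A_t | G) has the Beta(n+1−l, l) distribution. Let τ : Ω → {1, …, T} be G-measurable. Then for every b > 1 with 1/(bT) < 1, P(A_τ) ≥ I^{−1}(1/(bT); n+1−l, l) · (1 − 1/b), where A_τ denotes the event {ω : ω ∈ A_{τ(ω)}}. -/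

import Mathlib

noncomputable section

open MeasureTheory
open scoped ENNReal

/-- Density of the Beta distribution with parameters `c, d > 0` (with respect to
Lebesgue measure), supported on `(0,1)`. -/
def betaPDF (c d : ℝ) (x : ℝ) : ℝ≥0∞ :=
  if 0 < x ∧ x < 1 then
    ENNReal.ofReal (Real.Gamma (c + d) / (Real.Gamma c * Real.Gamma d) *
      x ^ (c - 1) * (1 - x) ^ (d - 1))
  else 0

/-- The Beta distribution with parameters `c, d`. -/
def betaMeasure (c d : ℝ) : Measure ℝ :=
  volume.withDensity (betaPDF c d)

/-- `I(x; c, d)`: the cumulative distribution function of the Beta distribution. -/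
def betaCDF (c d x : ℝ) : ℝ := (betaMeasure c d (Set.Iic x)).toReal

/-- `I⁻¹(p; c, d)`: the (generalized) inverse of the Beta CDF; on `(0,1)` it is the
unique `a ∈ (0,1)` with `I(a; c, d) = p`, since the Beta CDF is continuous and
strictly increasing there. -/
def betaInvCDF (c d p : ℝ) : ℝ := sInf {x : ℝ | p ≤ betaCDF c d x}

lemma betaMeasure_Iic_of_nonpos (c d : ℝ) {x : ℝ} (hx : x ≤ 0) :
    betaMeasure c d (Set.Iic x) = 0 := by
  rw [betaMeasure, withDensity_apply _ measurableSet_Iic]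
  rw [show (0:ℝ≥0∞) = ∫⁻ y in Set.Iic x, 0 by simp]
  refine setLIntegral_congr_fun measurableSet_Iic (fun y hy => ?_)
  simp only [Set.mem_Iic] at hy
  have : ¬ (0 < y ∧ y < 1) := fun h => absurd (h.1.trans_le (hy.trans hx)) (lt_irrefl 0)
  simp [betaPDF, this]

lemma betaMeasure_Iio_invCDF_le (c d p : ℝ) (hp0 : 0 < p)
    [IsFiniteMeasure (betaMeasure c d)] :
    betaMeasure c d (Set.Iio (betaInvCDF c d p)) ≤ ENNReal.ofReal p := by
  set a := betaInvCDF c d p with ha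
  have hbdd : BddBelow {x : ℝ | p ≤ betaCDF c d x} := by
    refine ⟨0, fun x hx => ?_⟩
    by_contra h
    push_neg at h
    have : betaCDF c d x = 0 := by
      rw [betaCDF, betaMeasure_Iic_of_nonpos c d h.le, ENNReal.toReal_zero]
    rw [Set.mem_setOf_eq, this] at hx
    exact absurd (hp0.trans_le hx) (lt_irrefl 0)
  have hIic : ∀ y : ℝ, y < a → betaMeasure c d (Set.Iic y) ≤ ENNReal.ofReal p := by
    intro y hy
    have hnot : ¬ p ≤ betaCDF c d y := by
      intro h
      exact absurd (csInf_le hbdd h) (not_le.mpr hy)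
    have : betaCDF c d y ≤ p := (not_le.mp hnot).le
    calc betaMeasure c d (Set.Iic y)
        = ENNReal.ofReal (betaCDF c d y) := by
          rw [betaCDF, ENNReal.ofReal_toReal (measure_ne_top _ _)]
      _ ≤ ENNReal.ofReal p := ENNReal.ofReal_le_ofReal this
  have hunion : Set.Iio a = ⋃ n : ℕ, Set.Iic (a - 1/(n+1)) := by
    ext x
    simp only [Set.mem_Iio, Set.mem_iUnion, Set.mem_Iic]
    constructor
    · intro hx
      obtain ⟨n, hn⟩ := exists_nat_one_div_lt (sub_pos.mpr hx)
      exact ⟨n, by linarith⟩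
    · rintro ⟨n, hn⟩
      have : (0:ℝ) < 1/(n+1) := by positivity
      linarith
  have hmono : Monotone fun n : ℕ => Set.Iic (a - 1/(n+1)) := by
    intro m k hmk
    apply Set.Iic_subset_Iic.mpr
    have : (1:ℝ)/(k+1) ≤ 1/(m+1) := by
      apply one_div_le_one_div_of_le (by positivity)
      have : (m:ℝ) ≤ k := Nat.cast_le.mpr hmk
      linarith
    linarith
  have htend := tendsto_measure_iUnion_atTop (μ := betaMeasure c d) hmono
  rw [hunion]
  refine le_of_tendsto htend (Filter.Eventually.of_forall fun n => ?_)
  apply hIic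
  have : (0:ℝ) < 1/(n+1) := by positivity
  linarith

/-- **coverage lower bound for data-driven model selection.**
If each coverage event `A_t` has `G`-conditional probability with the
`Beta(n+1−l, l)` distribution and the model `τ` is selected `G`-measurably, then
the coverage of the selected model satisfies the Markov-type lower bound. -/
theorem selected_model_coverage_bound
    {Ω : Type*} [mΩ : MeasurableSpace Ω] (P : Measure Ω) [IsProbabilityMeasure P]
    (G : MeasurableSpace Ω) (hG : G ≤ mΩ)
    (n : ℕ) (hn : 1 ≤ n) (α : ℝ) (hα : α ∈ Set.Ioo (0 : ℝ) 1)
    (l : ℕ) (hl : l = ⌊α * ((n : ℝ) + 1)⌋₊) (hl1 : 1 ≤ l) (hln : l ≤ n)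
    (T : ℕ) (hT : 0 < T)
    (A : Fin T → Set Ω) (hA : ∀ t, MeasurableSet[mΩ] (A t))
    (hbeta : ∀ t,
      @Measure.map Ω ℝ mΩ _
          (MeasureTheory.condExp G P ((A t).indicator fun _ => (1 : ℝ))) P =
        betaMeasure ((n : ℝ) + 1 - l) l)
    (τ : Ω → Fin T) (hτ : Measurable[G] τ)
    (b : ℝ) (hb : 1 < b) (hbT : 1 / (b * T) < 1) :
    ENNReal.ofReal (betaInvCDF ((n : ℝ) + 1 - l) l (1 / (b * T)) * (1 - 1 / b)) ≤
      P {ω | ω ∈ A (τ ω)} := by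
  classical
  letI : MeasurableSpace Ω := mΩ
  have hb0 : (0:ℝ) < b := lt_trans one_pos hb
  have hT0 : (0:ℝ) < T := by exact_mod_cast hT
  have hp0 : (0:ℝ) < 1 / (b * T) := by positivity
  set p : ℝ := 1 / (b * (T:ℝ)) with hp
  set a : ℝ := betaInvCDF ((n : ℝ) + 1 - l) l p with haDef
  set W : Fin T → Ω → ℝ :=
    fun t => MeasureTheory.condExp G P ((A t).indicator fun _ => (1:ℝ)) with hWdef
  have hWmeas : ∀ t, Measurable[mΩ] (W t) := fun t =>
    (stronglyMeasurable_condExp.mono hG).measurable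
  haveI hfin : IsProbabilityMeasure (betaMeasure ((n : ℝ) + 1 - l) l) := by
    rw [← hbeta ⟨0, hT⟩]
    exact Measure.isProbabilityMeasure_map (hWmeas ⟨0, hT⟩).aemeasurable
  have h1b : (0:ℝ) ≤ 1 - 1/b := by
    have : 1/b ≤ 1 := by rw [div_le_one hb0]; linarith
    linarith
  by_cases hanb : 0 ≤ a
  swap
  · have : a * (1 - 1/b) ≤ 0 :=
      mul_nonpos_of_nonpos_of_nonneg (le_of_not_ge hanb) h1b
    rw [ENNReal.ofReal_eq_zero.mpr this]
    exact zero_le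
  -- main case
  set s : Fin T → Set Ω := fun t => τ ⁻¹' {t} with hsdef
  have hsG : ∀ t, MeasurableSet[G] (s t) := fun t => hτ (measurableSet_singleton t)
  have hsM : ∀ t, MeasurableSet[mΩ] (s t) := fun t => hG _ (hsG t)
  have hCov : {ω | ω ∈ A (τ ω)} = ⋃ t, s t ∩ A t := by
    ext ω
    simp only [Set.mem_setOf_eq, Set.mem_iUnion, Set.mem_inter_iff, hsdef,
      Set.mem_preimage, Set.mem_singleton_iff]
    exact ⟨fun h => ⟨τ ω, rfl, h⟩, fun ⟨t, ht, h⟩ => ht ▸ h⟩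
  have hdisj : Pairwise (Function.onFun Disjoint fun t => s t ∩ A t) := by
    intro i j hij
    refine Set.disjoint_left.mpr ?_
    rintro ω ⟨hi, -⟩ ⟨hj, -⟩
    simp only [hsdef, Set.mem_preimage, Set.mem_singleton_iff] at hi hj
    exact hij (hi.symm.trans hj)
  have hmeasInt : ∀ t, MeasurableSet[mΩ] (s t ∩ A t) := fun t => (hsM t).inter (hA t)
  have hPC : P (⋃ t, s t ∩ A t) = ∑ t, P (s t ∩ A t) := by
    rw [measure_iUnion hdisj hmeasInt, tsum_fintype]
  have hind : ∀ t, Integrable ((A t).indicator fun _ => (1:ℝ)) P :=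
    fun t => (integrable_const 1).indicator (hA t)
  have hWint : ∀ t, Integrable (W t) P := fun t => integrable_condExp
  have hWnn : ∀ t, 0 ≤ᵐ[P] W t := fun t =>
    condExp_nonneg (Filter.Eventually.of_forall fun ω =>
      Set.indicator_nonneg (fun _ _ => zero_le_one) ω)
  have hWlt : ∀ t, P {ω | W t ω < a} ≤ ENNReal.ofReal p := by
    intro t
    have h : {ω | W t ω < a} = (W t) ⁻¹' (Set.Iio a) := rfl
    rw [h, ← Measure.map_apply (hWmeas t) measurableSet_Iio, hbeta t]
    exact betaMeasure_Iio_invCDF_le _ _ _ hp0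
  have key : ∀ t, a * ((P (s t)).toReal - p) ≤ (P (s t ∩ A t)).toReal := by
    intro t
    set E : Set Ω := s t ∩ {ω | a ≤ W t ω} with hEdef
    have hEmeas : MeasurableSet[mΩ] E :=
      (hsM t).inter (measurableSet_le measurable_const (hWmeas t))
    have h1 : (P (s t ∩ A t)).toReal
        = ∫ ω in s t, ((A t).indicator fun _ => (1:ℝ)) ω ∂P := by
      rw [setIntegral_indicator (hA t), setIntegral_const, smul_eq_mul, mul_one]
      rfl
    have h2 : ∫ ω in s t, ((A t).indicator fun _ => (1:ℝ)) ω ∂P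
        = ∫ ω in s t, W t ω ∂P := (setIntegral_condExp hG (hind t) (hsG t)).symm
    have h3 : ∫ ω in E, W t ω ∂P ≤ ∫ ω in s t, W t ω ∂P := by
      apply setIntegral_mono_set (hWint t).integrableOn (ae_restrict_of_ae (hWnn t))
      exact HasSubset.Subset.eventuallyLE Set.inter_subset_left
    have h4 : a * (P E).toReal ≤ ∫ ω in E, W t ω ∂P :=
      by
        have := setIntegral_ge_of_const_le hEmeas (measure_ne_top _ _)
          (fun ω hω => hω.2) (hWint t).integrableOn
        rw [smul_eq_mul, mul_comm] at this
        exact this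
    have h5 : (P (s t)).toReal ≤ (P E).toReal + p := by
      have hsub : s t ⊆ E ∪ {ω | W t ω < a} := by
        intro ω hω
        by_cases h : a ≤ W t ω
        · exact Or.inl ⟨hω, h⟩
        · exact Or.inr (not_le.mp h)
      have h6 : P (s t) ≤ P E + ENNReal.ofReal p :=
        ((measure_mono hsub).trans (measure_union_le _ _)).trans
          (add_le_add le_rfl (hWlt t))
      have h7 := ENNReal.toReal_mono
        (by exact ENNReal.add_ne_top.mpr ⟨measure_ne_top _ _, ENNReal.ofReal_ne_top⟩) h6
      rwa [ENNReal.toReal_add (measure_ne_top _ _) ENNReal.ofReal_ne_top,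
        ENNReal.toReal_ofReal hp0.le] at h7
    calc a * ((P (s t)).toReal - p) ≤ a * (P E).toReal := by
          apply mul_le_mul_of_nonneg_left _ hanb
          linarith
      _ ≤ ∫ ω in E, W t ω ∂P := h4
      _ ≤ ∫ ω in s t, W t ω ∂P := h3
      _ = (P (s t ∩ A t)).toReal := by rw [h1, h2]
  have hsumP : ∑ t, (P (s t)).toReal = 1 := by
    have hdisj' : Pairwise (Function.onFun Disjoint s) := by
      intro i j hij
      refine Set.disjoint_left.mpr ?_
      intro ω hi hj
      simp only [hsdef, Set.mem_preimage, Set.mem_singleton_iff] at hi hj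
      exact hij (hi.symm.trans hj)
    have hu : (⋃ t, s t) = Set.univ := by
      ext ω
      simp [hsdef]
    have h8 : P Set.univ = ∑ t, P (s t) := by
      rw [← hu, measure_iUnion hdisj' hsM, tsum_fintype]
    have h9 : ∑ t : Fin T, (P (s t)).toReal = (∑ t : Fin T, P (s t)).toReal :=
      (ENNReal.toReal_sum (fun t _ => measure_ne_top _ _)).symm
    rw [h9, ← h8, measure_univ, ENNReal.toReal_one]
  have hTp : (T:ℝ) * p = 1/b := by
    rw [hp]
    field_simp
  have hge : a * (1 - 1/b) ≤ (P {ω | ω ∈ A (τ ω)}).toReal := by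
    have hsum := Finset.sum_le_sum (fun t (_ : t ∈ Finset.univ) => key t)
    have hL : ∑ t : Fin T, a * ((P (s t)).toReal - p) = a * (1 - 1/b) := by
      rw [← Finset.mul_sum, Finset.sum_sub_distrib, hsumP, Finset.sum_const,
        Finset.card_univ, Fintype.card_fin, nsmul_eq_mul]
      rw [hTp]
    have hR : ∑ t : Fin T, (P (s t ∩ A t)).toReal = (P {ω | ω ∈ A (τ ω)}).toReal := by
      have h9 : ∑ t : Fin T, (P (s t ∩ A t)).toReal = (∑ t : Fin T, P (s t ∩ A t)).toReal :=
        (ENNReal.toReal_sum (fun t _ => measure_ne_top _ _)).symm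
      rw [h9, hCov, hPC]
    rw [hL, hR] at hsum
    exact hsum
  exact ENNReal.ofReal_le_of_le_toReal hge

end
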